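/- Fix distinct i, j ∈ {2, …, N}. Let h_i, h_j ∈ 𝓡 depend only on the variables v_{x^α} with α ≥ 1; set g_i := δh_i/δv_x, g_j := δh_j/δv_x, a_{ij} := Σ_{α≥0} v_{x^α t_j}·(δh_i/δv_{x^{α+1}}), a_{ji} := Σ_{α≥0} v_{x^α t_i}·(δh_j/δv_{x^{α+1}}), and suppose b_{ij}, b_{ji} ∈ 𝓡 satisfy D_x(b_{ij}) = D_x(g_i)·g_j and D_x(b_{ji}) = D_x(g_j)·g_i. Define L_{1i} := (1/2)v_x v_{t_i} − h_i, L_{1j} := (1/2)v_x v_{t_j} − h_j, and L_{ij} := (1/2)(v_{t_i}·g_j − v_{t_j}·g_i) + (a_{ij} − a_{ji}) − (1/2)(b_{ij} − b_{ji}). Then the exterior-derivative coefficient satisfies the identity D_j(L_{1i}) − D_i(L_{1j}) + D_x(L_{ij}) = (1/2)(v_{t_i} − g_i)·D_x(v_{t_j} − g_j) − (1/2)(v_{t_j} − g_j)·D_x(v_{t_i} − g_i) in 𝓡. In particular this coefficient vanishes under substitution of either of the evolution equations v_{t_i} = g_i or v_{t_j} = g_j (together with its x-differentiated consequences). -/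

import Mathlib

open MvPolynomial

noncomputable section

/-- The ring `𝓡` of differential polynomials of a field `v` in independent variables
`t_1, …, t_N`: the polynomial ring over `ℝ` in commuting variables `v_I` indexed by
multi-indices `I : Fin N → ℕ`. -/
abbrev DiffPoly (N : ℕ) := MvPolynomial (Fin N → ℕ) ℝ

/-- The total derivative `D_m`, determined by `D_m (v_I) = v_{I + e_m}`. -/
noncomputable def totalDeriv {N : ℕ} (m : Fin N) :
    Derivation ℝ (DiffPoly N) (DiffPoly N) :=
  MvPolynomial.mkDerivation ℝ fun I => X (I + Pi.single m 1)

/-- The x-variational derivative `δf/δv_I = Σ_α (−1)^α D_x^α (∂f/∂v_{I+α·e_x})`,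
where `x` is the coordinate direction playing the role of `t_1`. -/
noncomputable def varDeriv {N : ℕ} (x : Fin N) (I : Fin N → ℕ) (f : DiffPoly N) :
    DiffPoly N :=
  ∑ᶠ α : ℕ, (-1 : ℝ) ^ α • (fun p => totalDeriv x p)^[α] (pderiv (I + α • Pi.single x 1) f)

/-- The (m,l)-variational derivative
`δ_{ml}f/δv_I = Σ_{α,β} (−1)^{α+β} D_m^α D_l^β (∂f/∂v_{I+α·e_m+β·e_l})`. -/
noncomputable def varDeriv2 {N : ℕ} (m l : Fin N) (I : Fin N → ℕ) (f : DiffPoly N) :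
    DiffPoly N :=
  ∑ᶠ α : ℕ, ∑ᶠ β : ℕ, (-1 : ℝ) ^ (α + β) •
    (fun p => totalDeriv m p)^[α] ((fun p => totalDeriv l p)^[β]
      (pderiv (I + α • Pi.single m 1 + β • Pi.single l 1) f))

/-- `g := δh/δv_x`, the variational derivative with respect to `v_x`. -/
noncomputable def gOf {N : ℕ} (x : Fin N) (h : DiffPoly N) : DiffPoly N :=
  varDeriv x (Pi.single x 1) h

/-- `a_{··} := Σ_α v_{x^α t_m} · (δh/δv_{x^{α+1}})`. -/
noncomputable def aOf {N : ℕ} (x m : Fin N) (h : DiffPoly N) : DiffPoly N :=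
  ∑ᶠ α : ℕ, X (α • Pi.single x 1 + Pi.single m 1) * varDeriv x ((α + 1) • Pi.single x 1) h

namespace S15

variable {N : ℕ}

lemma totalDeriv_X (m : Fin N) (I : Fin N → ℕ) :
    totalDeriv m (X I : DiffPoly N) = X (I + Pi.single m 1) :=
  mkDerivation_X _ _ _

lemma iter_zero (x : Fin N) (n : ℕ) :
    (fun p => totalDeriv x p)^[n] (0 : DiffPoly N) = 0 :=
  Function.iterate_fixed (map_zero _) n

def nb (x : Fin N) (H : DiffPoly N) : ℕ := (H.vars.sup fun v => v x) + 1

lemma pderiv_nb {x : Fin N} {H : DiffPoly N} {I : Fin N → ℕ} (h : nb x H ≤ I x) :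
    pderiv I H = 0 := by
  apply pderiv_eq_zero_of_notMem_vars
  intro hmem
  have h2 : I x ≤ H.vars.sup fun v => v x := Finset.le_sup (f := fun v : Fin N → ℕ => v x) hmem
  simp only [nb] at h
  exact Nat.not_succ_le_self _ (h.trans h2)

lemma smul_single_x (x : Fin N) (β : ℕ) : ((β • Pi.single x 1 : Fin N → ℕ)) x = β := by
  simp

lemma add_smul_single_x (x : Fin N) (I : Fin N → ℕ) (β : ℕ) :
    ((I + β • Pi.single x 1 : Fin N → ℕ)) x = I x + β := by
  simp

/-- `E_β := δH/δv_{x^β}`. -/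
def Evar (x : Fin N) (β : ℕ) (H : DiffPoly N) : DiffPoly N :=
  varDeriv x (β • Pi.single x 1) H

lemma Evar_eq (x : Fin N) (β : ℕ) (H : DiffPoly N) :
    Evar x β H = ∑ᶠ α : ℕ,
      (-1 : ℝ) ^ α • (fun p => totalDeriv x p)^[α] (pderiv ((β + α) • Pi.single x 1) H) := by
  unfold Evar varDeriv
  exact finsum_congr fun α => by rw [add_smul]

lemma Evar_eq_sum (x : Fin N) (β : ℕ) (H : DiffPoly N) (n : ℕ) (hn : nb x H ≤ β + n) :
    Evar x β H = ∑ α ∈ Finset.range n,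
      (-1 : ℝ) ^ α • (fun p => totalDeriv x p)^[α] (pderiv ((β + α) • Pi.single x 1) H) := by
  rw [Evar_eq]
  apply finsum_eq_sum_of_support_subset
  intro α hα
  simp only [Function.mem_support] at hα
  simp only [Finset.coe_range, Set.mem_Iio]
  by_contra hc
  push_neg at hc
  have : pderiv ((β + α) • Pi.single x 1) H = 0 :=
    pderiv_nb (by rw [smul_single_x]; omega)
  rw [this, iter_zero, smul_zero] at hα
  exact hα rfl

lemma Evar_zero (x : Fin N) (β : ℕ) (H : DiffPoly N) (hn : nb x H ≤ β) :
    Evar x β H = 0 := by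
  rw [Evar_eq_sum x β H 0 (by omega)]
  simp


lemma Evar_rec (x : Fin N) (β : ℕ) (H : DiffPoly N) :
    Evar x β H = pderiv (β • Pi.single x 1) H - totalDeriv x (Evar x (β + 1) H) := by
  set n := nb x H with hn
  rw [Evar_eq_sum x β H (n + 1) (by omega), Evar_eq_sum x (β + 1) H n (by omega),
    Finset.sum_range_succ']
  have h1 : ∀ α : ℕ,
      (-1 : ℝ) ^ (α + 1) •
        (fun p => totalDeriv x p)^[α + 1] (pderiv ((β + (α + 1)) • Pi.single x 1) H)
      = -((-1 : ℝ) ^ α •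
          totalDeriv x ((fun p => totalDeriv x p)^[α]
            (pderiv ((β + 1 + α) • Pi.single x 1) H))) := by
    intro α
    have hidx : β + (α + 1) = β + 1 + α := by omega
    rw [hidx, Function.iterate_succ_apply', pow_succ, mul_smul, neg_one_smul, smul_neg]
  rw [Finset.sum_congr rfl fun α _ => h1 α, Finset.sum_neg_distrib, map_sum]
  simp only [Derivation.map_smul]
  simp only [pow_zero, one_smul, Function.iterate_zero, id_eq, Nat.add_zero]
  abel

lemma gOf_eq (x : Fin N) (H : DiffPoly N) : gOf x H = Evar x 1 H := by
  unfold gOf Evar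
  rw [one_smul]

lemma aOf_eq_sum (x m : Fin N) (H : DiffPoly N) :
    aOf x m H = ∑ α ∈ Finset.range (nb x H),
      X (α • Pi.single x 1 + Pi.single m 1) * Evar x (α + 1) H := by
  unfold aOf
  apply finsum_eq_sum_of_support_subset
  intro α hα
  simp only [Function.mem_support] at hα
  simp only [Finset.coe_range, Set.mem_Iio]
  by_contra hc
  push_neg at hc
  have hz : varDeriv x ((α + 1) • Pi.single x 1) H = 0 := Evar_zero x (α + 1) H (by omega)
  rw [hz, mul_zero] at hα
  exact hα rfl

set_option maxHeartbeats 400000 in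
lemma Dx_aOf (x m : Fin N) (H : DiffPoly N) :
    totalDeriv x (aOf x m H)
      = (∑ᶠ α : ℕ, X (α • Pi.single x 1 + Pi.single m 1) * pderiv (α • Pi.single x 1) H)
        - X (Pi.single m 1) * Evar x 0 H := by
  set n := nb x H with hn
  rw [aOf_eq_sum, map_sum]
  have hterm : ∀ α : ℕ,
      totalDeriv x (X (α • Pi.single x 1 + Pi.single m 1) * Evar x (α + 1) H)
      = (X ((α + 1) • Pi.single x 1 + Pi.single m 1) * Evar x (α + 1) H
          - X (α • Pi.single x 1 + Pi.single m 1) * Evar x α H)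
        + X (α • Pi.single x 1 + Pi.single m 1) * pderiv (α • Pi.single x 1) H := by
    intro α
    rw [Derivation.leibniz, smul_eq_mul, smul_eq_mul, totalDeriv_X]
    have h2 : totalDeriv x (Evar x (α + 1) H)
        = pderiv (α • Pi.single x 1) H - Evar x α H := by
      rw [Evar_rec x α H, sub_sub_cancel]
    have hidx : (α • Pi.single x 1 + Pi.single m 1 + Pi.single x 1 : Fin N → ℕ)
        = (α + 1) • Pi.single x 1 + Pi.single m 1 := by
      rw [succ_nsmul, add_right_comm]
    rw [h2, hidx]
    ring
  have htel := Finset.sum_range_sub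
    (fun α => X (α • Pi.single x 1 + Pi.single m 1) * Evar x α H) n
  beta_reduce at htel
  simp only [hterm]
  rw [Finset.sum_add_distrib, htel]
  have hEn : Evar x n H = 0 := Evar_zero x n H le_rfl
  have h0 : ((0 : ℕ) • Pi.single x 1 + Pi.single m 1 : Fin N → ℕ) = Pi.single m 1 := by
    rw [zero_smul, zero_add]
  have hf : (∑ᶠ α : ℕ, X (α • Pi.single x 1 + Pi.single m 1) * pderiv (α • Pi.single x 1) H)
      = ∑ α ∈ Finset.range n,
          X (α • Pi.single x 1 + Pi.single m 1) * pderiv (α • Pi.single x 1) H := by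
    apply finsum_eq_sum_of_support_subset
    intro α hα
    simp only [Function.mem_support] at hα
    simp only [Finset.coe_range, Set.mem_Iio]
    by_contra hc
    push_neg at hc
    have hz : pderiv (α • Pi.single x 1) H = 0 := pderiv_nb (by rw [smul_single_x]; omega)
    rw [hz, mul_zero] at hα
    exact hα rfl
  rw [hEn, hf, h0]
  ring

lemma smul_single_inj (x : Fin N) {α γ : ℕ}
    (h : (α • Pi.single x 1 : Fin N → ℕ) = γ • Pi.single x 1) : α = γ := by
  have := congrFun h x
  simpa using this

lemma suppF_fin (x m : Fin N) (H : DiffPoly N) :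
    (Function.support fun α : ℕ =>
      X (α • Pi.single x 1 + Pi.single m 1) * pderiv (α • Pi.single x 1) H).Finite := by
  apply Set.Finite.subset (Finset.range (nb x H)).finite_toSet
  intro α hα
  simp only [Function.mem_support] at hα
  simp only [Finset.coe_range, Set.mem_Iio]
  by_contra hc
  push_neg at hc
  have hz : pderiv (α • Pi.single x 1) H = 0 := pderiv_nb (by rw [smul_single_x]; omega)
  rw [hz, mul_zero] at hα
  exact hα rfl

lemma dep_main (x m : Fin N) (H : DiffPoly N)
    (hdep : H ∈ Algebra.adjoin ℝ
      {p : DiffPoly N | ∃ α : ℕ, 1 ≤ α ∧ p = X (α • Pi.single x 1)}) :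
    (totalDeriv m H
      = ∑ᶠ α : ℕ, X (α • Pi.single x 1 + Pi.single m 1) * pderiv (α • Pi.single x 1) H)
    ∧ pderiv (0 : Fin N → ℕ) H = 0 := by
  induction hdep using Algebra.adjoin_induction with
  | mem p hp =>
    obtain ⟨γ, hγ, rfl⟩ := hp
    constructor
    · rw [totalDeriv_X]
      rw [finsum_eq_single _ γ]
      · rw [pderiv_X_self, mul_one]
      · intro α hα
        rw [pderiv_X_of_ne, mul_zero]
        intro hc
        exact hα (smul_single_inj x hc).symm
    · apply pderiv_X_of_ne
      intro hc
      have := congrFun hc x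
      simp at this
      omega
  | algebraMap r =>
    constructor
    · rw [Derivation.map_algebraMap]
      rw [show (algebraMap ℝ (DiffPoly N)) r = C r from rfl]
      have : ∀ α : ℕ,
          X (α • Pi.single x 1 + Pi.single m 1) * pderiv (α • Pi.single x 1) (C r : DiffPoly N)
            = 0 := by
        intro α
        rw [pderiv_C, mul_zero]
      rw [finsum_congr this, finsum_zero]
    · rw [show (algebraMap ℝ (DiffPoly N)) r = C r from rfl, pderiv_C]
  | add p q hp hq ihp ihq =>
    obtain ⟨ihp1, ihp2⟩ := ihp
    obtain ⟨ihq1, ihq2⟩ := ihq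
    constructor
    · rw [map_add, ihp1, ihq1, ← finsum_add_distrib (suppF_fin x m p) (suppF_fin x m q)]
      apply finsum_congr
      intro α
      rw [map_add, mul_add]
    · rw [map_add, ihp2, ihq2, add_zero]
  | mul p q hp hq ihp ihq =>
    obtain ⟨ihp1, ihp2⟩ := ihp
    obtain ⟨ihq1, ihq2⟩ := ihq
    constructor
    · rw [Derivation.leibniz, smul_eq_mul, smul_eq_mul, ihp1, ihq1,
        mul_finsum _ p, mul_finsum _ q,
        ← finsum_add_distrib]
      · apply finsum_congr
        intro α
        rw [pderiv_mul]
        ring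
      · apply Set.Finite.subset (suppF_fin x m q)
        intro α hα
        simp only [Function.mem_support] at hα ⊢
        intro hc
        rw [hc, mul_zero] at hα
        exact hα rfl
      · apply Set.Finite.subset (suppF_fin x m p)
        intro α hα
        simp only [Function.mem_support] at hα ⊢
        intro hc
        rw [hc, mul_zero] at hα
        exact hα rfl
    · rw [pderiv_mul, ihp2, ihq2, zero_mul, mul_zero, add_zero]

lemma keyA (x m : Fin N) (H : DiffPoly N)
    (hdep : H ∈ Algebra.adjoin ℝ
      {p : DiffPoly N | ∃ α : ℕ, 1 ≤ α ∧ p = X (α • Pi.single x 1)}) :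
    totalDeriv x (aOf x m H)
      = totalDeriv m H + X (Pi.single m 1) * totalDeriv x (gOf x H) := by
  obtain ⟨h1, h2⟩ := dep_main x m H hdep
  have h3 : Evar x 0 H = - totalDeriv x (gOf x H) := by
    rw [Evar_rec x 0 H, gOf_eq]
    have hz : pderiv ((0 : ℕ) • Pi.single x 1) H = 0 := by rw [zero_smul]; exact h2
    rw [hz, zero_sub]
  rw [Dx_aOf, ← h1, h3]
  ring

end S15

/-- with `L_{1i} = ½ v_x v_{t_i} − h_i`, `L_{1j} = ½ v_x v_{t_j} − h_j` and
`L_{ij} = ½(v_{t_i}g_j − v_{t_j}g_i) + (a_{ij} − a_{ji}) − ½(b_{ij} − b_{ji})`, one has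
`D_j(L_{1i}) − D_i(L_{1j}) + D_x(L_{ij})
  = ½(v_{t_i} − g_i)·D_x(v_{t_j} − g_j) − ½(v_{t_j} − g_j)·D_x(v_{t_i} − g_i)`. -/
theorem stmt_15 (N : ℕ) (hN : 2 ≤ N) (x : Fin N) (hx : x = ⟨0, by omega⟩)
    (i j : Fin N) (hi : i ≠ x) (hj : j ≠ x) (hij : i ≠ j)
    (Hi Hj : DiffPoly N)
    (hdepi : Hi ∈ Algebra.adjoin ℝ
      {p : DiffPoly N | ∃ α : ℕ, 1 ≤ α ∧ p = X (α • Pi.single x 1)})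
    (hdepj : Hj ∈ Algebra.adjoin ℝ
      {p : DiffPoly N | ∃ α : ℕ, 1 ≤ α ∧ p = X (α • Pi.single x 1)})
    (bij bji : DiffPoly N)
    (hbij : totalDeriv x bij = totalDeriv x (gOf x Hi) * gOf x Hj)
    (hbji : totalDeriv x bji = totalDeriv x (gOf x Hj) * gOf x Hi) :
    totalDeriv j ((1 / 2 : ℝ) • (X (Pi.single x 1) * X (Pi.single i 1)) - Hi)
      - totalDeriv i ((1 / 2 : ℝ) • (X (Pi.single x 1) * X (Pi.single j 1)) - Hj)
      + totalDeriv x ((1 / 2 : ℝ) •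
            (X (Pi.single i 1) * gOf x Hj - X (Pi.single j 1) * gOf x Hi)
          + (aOf x j Hi - aOf x i Hj) - (1 / 2 : ℝ) • (bij - bji))
    = (1 / 2 : ℝ) • ((X (Pi.single i 1) - gOf x Hi)
          * totalDeriv x (X (Pi.single j 1) - gOf x Hj))
      - (1 / 2 : ℝ) • ((X (Pi.single j 1) - gOf x Hj)
          * totalDeriv x (X (Pi.single i 1) - gOf x Hi)) := by
  have ki := S15.keyA x j Hi hdepi
  have kj := S15.keyA x i Hj hdepj
  simp only [map_sub, map_add, Derivation.map_smul, Derivation.leibniz, smul_eq_mul,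
    S15.totalDeriv_X]
  rw [ki, kj, hbij, hbji]
  have hc1 : (Pi.single x 1 + Pi.single i 1 : Fin N → ℕ) = Pi.single i 1 + Pi.single x 1 :=
    add_comm _ _
  have hc2 : (Pi.single x 1 + Pi.single j 1 : Fin N → ℕ) = Pi.single j 1 + Pi.single x 1 :=
    add_comm _ _
  have hc3 : (Pi.single j 1 + Pi.single i 1 : Fin N → ℕ) = Pi.single i 1 + Pi.single j 1 :=
    add_comm _ _
  rw [hc1, hc2, hc3]
  simp only [MvPolynomial.smul_eq_C_mul]
  have hC : (C (1 / 2 : ℝ) : DiffPoly N) + C (1 / 2) = 1 := by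
    rw [← C_add]
    norm_num
  linear_combination (X (Pi.single i 1) * totalDeriv x (gOf x Hj)
    - X (Pi.single j 1) * totalDeriv x (gOf x Hi)) * hC
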